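/- arXiv:1512.04603 — 3 statements merged into one kernel-verified Lean document; each statement's English description precedes it below -/
import Mathlib

section
/- Let A be a 2g×2g integer matrix with det(A - Aᵀ) = ±1. For every x, w ∈ Λ^{2g}, the element ((tA - Aᵀ)x)ᵀ · (t-1) · (A - tAᵀ)⁻¹ · w̄ of Q = ℚ(t) lies in Λ = ℤ[t,t⁻¹]. (Hence the pairing (v,w) ↦ vᵀ(t-1)(A - tAᵀ)⁻¹w̄ ∈ Q/Λ is well defined in the first variable on the quotient module Λ^{2g}/(tA - Aᵀ)Λ^{2g}.) -/
open Matrix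

set_option maxHeartbeats 2000000
set_option synthInstance.maxHeartbeats 2000000

/-- The variable `t`, i.e. `X`, in the rational function field `Q = ℚ(t)`. -/
noncomputable def tQ : RatFunc ℚ := RatFunc.X

/-- The involution `t ↦ t⁻¹` of `ℚ(t)`, applied as a function. -/
noncomputable def conjQ : RatFunc ℚ → RatFunc ℚ :=
  RatFunc.eval (algebraMap ℚ (RatFunc ℚ)) tQ⁻¹

/-- The Laurent polynomial ring `Λ = ℤ[t,t⁻¹]`, as a subring of `ℚ(t)`. -/
noncomputable def Lam : Subring (RatFunc ℚ) := Subring.closure {tQ, tQ⁻¹}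

lemma tQ_transcendental : Transcendental ℚ tQ := by
  rw [tQ, ← RatFunc.algebraMap_X (K := ℚ)]
  exact (transcendental_algebraMap_iff (RatFunc.algebraMap_injective ℚ)).2
    (Polynomial.transcendental_X ℚ)

lemma tQ_inv_transcendental : Transcendental ℚ tQ⁻¹ := fun h =>
  tQ_transcendental (IsAlgebraic.inv_iff.mp h)

lemma eval₂_tQinv_ne_zero {p : Polynomial ℚ} (hp : p ≠ 0) :
    Polynomial.eval₂ (algebraMap ℚ (RatFunc ℚ)) tQ⁻¹ p ≠ 0 := fun h =>
  hp (transcendental_iff.mp tQ_inv_transcendental p (by rwa [Polynomial.aeval_def]))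

lemma conjQ_add (a b : RatFunc ℚ) : conjQ (a + b) = conjQ a + conjQ b :=
  RatFunc.eval_add (f := algebraMap ℚ (RatFunc ℚ)) (a := tQ⁻¹) (eval₂_tQinv_ne_zero (RatFunc.denom_ne_zero a))
    (eval₂_tQinv_ne_zero (RatFunc.denom_ne_zero b))

lemma conjQ_mul (a b : RatFunc ℚ) : conjQ (a * b) = conjQ a * conjQ b :=
  RatFunc.eval_mul (f := algebraMap ℚ (RatFunc ℚ)) (a := tQ⁻¹) (eval₂_tQinv_ne_zero (RatFunc.denom_ne_zero a))
    (eval₂_tQinv_ne_zero (RatFunc.denom_ne_zero b))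

lemma conjQ_zero : conjQ 0 = 0 := RatFunc.eval_zero _ _
lemma conjQ_one : conjQ 1 = 1 := RatFunc.eval_one _ _
lemma conjQ_tQ : conjQ tQ = tQ⁻¹ := RatFunc.eval_X _ _

lemma conjQ_neg (a : RatFunc ℚ) : conjQ (-a) = -conjQ a := by
  have := conjQ_add a (-a)
  rw [add_neg_cancel, conjQ_zero] at this
  linear_combination -this

lemma tQ_ne_zero : tQ ≠ 0 := RatFunc.X_ne_zero

lemma conjQ_tQinv : conjQ tQ⁻¹ = tQ := by
  have h := conjQ_mul tQ tQ⁻¹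
  rw [mul_inv_cancel₀ tQ_ne_zero, conjQ_one, conjQ_tQ] at h
  have h2 : tQ⁻¹ ≠ 0 := inv_ne_zero tQ_ne_zero
  have := congrArg (tQ * ·) h
  simp only [← mul_assoc, mul_inv_cancel₀ tQ_ne_zero, one_mul, mul_one] at this
  exact this.symm

lemma conjQ_mem {z : RatFunc ℚ} (hz : z ∈ Lam) : conjQ z ∈ Lam := by
  induction hz using Subring.closure_induction with
  | mem y hy =>
    rcases hy with rfl | rfl
    · rw [conjQ_tQ]; exact Subring.subset_closure (Set.mem_insert_of_mem _ rfl)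
    · rw [conjQ_tQinv]; exact Subring.subset_closure (Set.mem_insert _ _)
  | zero => rw [conjQ_zero]; exact zero_mem _
  | one => rw [conjQ_one]; exact one_mem _
  | add a b _ _ ha hb => rw [conjQ_add]; exact add_mem ha hb
  | neg a _ ha => rw [conjQ_neg]; exact neg_mem ha
  | mul a b _ _ ha hb => rw [conjQ_mul]; exact mul_mem ha hb

lemma tQ_mem : tQ ∈ Lam := Subring.subset_closure (Set.mem_insert _ _)


theorem blanchfield_pairing_well_defined_first_variable (g : ℕ)
    (A : Matrix (Fin (2*g)) (Fin (2*g)) ℤ)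
    (hA : (A - Aᵀ).det = 1 ∨ (A - Aᵀ).det = -1)
    (A' : Matrix (Fin (2*g)) (Fin (2*g)) (RatFunc ℚ)) (hA' : A' = A.map Int.cast)
    (x w : Fin (2*g) → RatFunc ℚ) (hx : ∀ i, x i ∈ Lam) (hw : ∀ i, w i ∈ Lam) :
    ((tQ • A' - A'ᵀ).mulVec x) ⬝ᵥ
      ((tQ - 1) • (A' - tQ • A'ᵀ)⁻¹.mulVec (fun i => conjQ (w i))) ∈ Lam := by
  set w' : Fin (2*g) → RatFunc ℚ := fun i => conjQ (w i) with hw'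
  set B : Matrix (Fin (2*g)) (Fin (2*g)) (RatFunc ℚ) := A' - tQ • A'ᵀ with hB
  -- invertibility of B
  have hdet : IsUnit B.det := by
    set Bp : Matrix (Fin (2*g)) (Fin (2*g)) (Polynomial ℚ) :=
      A.map (Int.cast : ℤ → Polynomial ℚ) - (Polynomial.X : Polynomial ℚ) • (A.map (Int.cast : ℤ → Polynomial ℚ))ᵀ with hBp
    have hmap : B = Bp.map (algebraMap (Polynomial ℚ) (RatFunc ℚ)) := by
      ext i j
      simp [hB, hBp, hA', Matrix.map_apply, Matrix.sub_apply, Matrix.smul_apply,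
        Matrix.transpose_apply, map_intCast, RatFunc.algebraMap_X, tQ, smul_eq_mul]
    have hBpdet : Bp.det ≠ 0 := by
      intro h0
      have he : Polynomial.eval 1 Bp.det = ((A - Aᵀ).det : ℚ) := by
        have h1 : (Polynomial.evalRingHom (1 : ℚ)) Bp.det =
            (Bp.map (Polynomial.evalRingHom (1 : ℚ))).det := RingHom.map_det _ _
        have h2 : Bp.map (Polynomial.evalRingHom (1 : ℚ)) =
            (A - Aᵀ).map (Int.castRingHom ℚ) := by
          ext i j
          simp [hBp, Matrix.map_apply, Matrix.sub_apply, Matrix.smul_apply,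
            Matrix.transpose_apply, smul_eq_mul]
        have h3 : ((A - Aᵀ).map (Int.castRingHom ℚ)).det = ((A - Aᵀ).det : ℚ) :=
          ((Int.castRingHom ℚ).map_det _).symm
        calc Polynomial.eval 1 Bp.det = (Polynomial.evalRingHom (1 : ℚ)) Bp.det := rfl
          _ = ((A - Aᵀ).det : ℚ) := by rw [h1, h2, h3]
      rw [h0] at he
      rcases hA with h | h <;> rw [h] at he <;> norm_num at he
    rw [hmap]
    have hdd : (Bp.map (algebraMap (Polynomial ℚ) (RatFunc ℚ))).det
        = algebraMap (Polynomial ℚ) (RatFunc ℚ) Bp.det :=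
      ((algebraMap (Polynomial ℚ) (RatFunc ℚ)).map_det Bp).symm
    rw [hdd, isUnit_iff_ne_zero]
    intro h
    exact hBpdet (RatFunc.algebraMap_injective ℚ (by simpa using h))
  -- the algebraic identity
  have h1 : tQ • A' - A'ᵀ = -Bᵀ := by
    rw [hB, Matrix.transpose_sub, Matrix.transpose_smul, Matrix.transpose_transpose]
    abel
  have h2 : ((tQ • A' - A'ᵀ).mulVec x) ⬝ᵥ (B⁻¹.mulVec w') = -(x ⬝ᵥ w') := by
    rw [h1, Matrix.neg_mulVec, neg_dotProduct, Matrix.mulVec_transpose,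
      Matrix.dotProduct_mulVec, Matrix.vecMul_vecMul, Matrix.mul_nonsing_inv _ hdet,
      Matrix.vecMul_one]
  rw [dotProduct_smul, h2, smul_eq_mul]
  refine mul_mem (sub_mem tQ_mem (one_mem _)) (neg_mem ?_)
  exact Subring.sum_mem _ fun i _ => mul_mem (hx i) (conjQ_mem (hw i))
end

section
/- Let A = [[-1, 1], [0, -1]] (a Seifert matrix of the trefoil). Then there exist x, w ∈ Λ² (e.g. x = w = e₁, the first standard basis vector) such that ((tA - Aᵀ)x)ᵀ · (t-1) · (tA - Aᵀ)⁻¹ · w does NOT lie in Λ = ℤ[t,t⁻¹]. Consequently, Kearton's formula (v,w) ↦ vᵀ(t-1)(tA - Aᵀ)⁻¹w̄ does not descend to a well-defined pairing on Λ²/(tA - Aᵀ)Λ². -/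
open Matrix

set_option maxHeartbeats 2000000
set_option synthInstance.maxHeartbeats 2000000

noncomputable abbrev algQ : Polynomial ℚ →+* RatFunc ℚ :=
  algebraMap (Polynomial ℚ) (RatFunc ℚ)

lemma tQ_eq : tQ = algQ Polynomial.X := (RatFunc.algebraMap_X (K := ℚ)).symm

/-- Subring of `ℚ(t)` of elements `f` with `f · tⁿ` a polynomial. -/
noncomputable def Spoly : Subring (RatFunc ℚ) where
  carrier := {f | ∃ (p : Polynomial ℚ) (n : ℕ), f * tQ ^ n = algQ p}
  one_mem' := ⟨1, 0, by simp⟩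
  zero_mem' := ⟨0, 0, by simp⟩
  mul_mem' := by
    rintro a b ⟨p, n, hp⟩ ⟨q, m, hq⟩
    exact ⟨p * q, n + m, by rw [_root_.map_mul, ← hp, ← hq]; ring⟩
  add_mem' := by
    rintro a b ⟨p, n, hp⟩ ⟨q, m, hq⟩
    refine ⟨p * Polynomial.X ^ m + q * Polynomial.X ^ n, n + m, ?_⟩
    rw [_root_.map_add, _root_.map_mul, _root_.map_mul, map_pow, map_pow, ← tQ_eq,
      ← hp, ← hq]; ring
  neg_mem' := by
    rintro a ⟨p, n, hp⟩
    exact ⟨-p, n, by rw [_root_.map_neg, ← hp]; ring⟩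

lemma Lam_le_Spoly : Lam ≤ Spoly := by
  rw [Lam, Subring.closure_le]
  rintro f (rfl | rfl)
  · exact ⟨Polynomial.X, 0, by rw [tQ_eq]; simp⟩
  · refine ⟨1, 1, ?_⟩
    have : tQ ≠ 0 := RatFunc.X_ne_zero
    field_simp
    simp

noncomputable def zeta : ℂ := (1 + Complex.I * Real.sqrt 3) / 2

lemma zeta_sq : zeta ^ 2 - zeta + 1 = 0 := by
  have h3 : (Real.sqrt 3 : ℂ) ^ 2 = 3 := by
    rw [← Complex.ofReal_pow, Real.sq_sqrt (by norm_num : (3:ℝ) ≥ 0)]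
    norm_num
  rw [zeta]
  ring_nf
  rw [Complex.I_sq]
  ring_nf
  rw [h3]
  ring

lemma zeta_ne_zero : zeta ≠ 0 := by
  intro h
  have := zeta_sq
  rw [h] at this
  norm_num at this

lemma zeta_ne_one : zeta ≠ 1 := by
  intro h
  have := zeta_sq
  rw [h] at this
  norm_num at this

lemma zeta_ne_two : zeta ≠ 2 := by
  intro h
  have := zeta_sq
  rw [h] at this
  norm_num at this

theorem kearton_formula_not_well_defined
    (A : Matrix (Fin 2) (Fin 2) ℤ) (hA : A = !![-1, 1; 0, -1])
    (A' : Matrix (Fin 2) (Fin 2) (RatFunc ℚ)) (hA' : A' = A.map Int.cast) :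
    ∃ x w : Fin 2 → RatFunc ℚ, (∀ i, x i ∈ Lam) ∧ (∀ i, w i ∈ Lam) ∧
      ((tQ • A' - A'ᵀ).mulVec x) ⬝ᵥ
        ((tQ - 1) • (tQ • A' - A'ᵀ)⁻¹.mulVec w) ∉ Lam := by
  have htA : tQ = algQ Polynomial.X := tQ_eq
  have hone : Lam.subtype 1 = 1 := rfl
  -- t is in Lam
  have ht_mem : tQ ∈ Lam := Subring.subset_closure (by left; rfl)
  have hone_mem : (1 : RatFunc ℚ) ∈ Lam := Subring.one_mem _
  have hzero_mem : (0 : RatFunc ℚ) ∈ Lam := Subring.zero_mem _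
  -- the matrix M
  have hA'v : A' = !![-1, 1; 0, -1] := by
    subst hA hA'
    ext i j
    fin_cases i <;> fin_cases j <;> simp [Matrix.map_apply]
  subst hA'v
  set M : Matrix (Fin 2) (Fin 2) (RatFunc ℚ) := tQ • !![-1, 1; 0, -1] - !![-1, 1; 0, -1]ᵀ with hM
  have hT : (!![-1, 1; 0, -1] : Matrix (Fin 2) (Fin 2) (RatFunc ℚ))ᵀ
      = !![-1, 0; 1, -1] := by
    ext i j; fin_cases i <;> fin_cases j <;> rfl
  have hMval : M = !![1 - tQ, tQ; -1, 1 - tQ] := by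
    rw [hM, hT]
    ext i j
    fin_cases i <;> fin_cases j <;>
      simp [Matrix.smul_apply, Matrix.sub_apply] <;> ring
  -- determinant
  set d : RatFunc ℚ := tQ ^ 2 - tQ + 1 with hd
  have hdet : M.det = d := by
    rw [hMval, Matrix.det_fin_two_of, hd]; ring
  have hDpoly : d = algQ (Polynomial.X ^ 2 - Polynomial.X + 1) := by
    rw [hd, htA]
    push_cast [_root_.map_add, _root_.map_sub, map_pow, _root_.map_one]
    ring
  have hdne : d ≠ 0 := by
    rw [hDpoly]
    refine (map_ne_zero_iff algQ (RatFunc.algebraMap_injective ℚ)).mpr ?_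
    intro h
    have := congrArg (Polynomial.eval 0) h
    simp at this
  -- inverse
  have hMinv : M⁻¹ = d⁻¹ • !![1 - tQ, -tQ; 1, 1 - tQ] := by
    rw [Matrix.inv_def, hdet, Ring.inverse_eq_inv, hMval, Matrix.adjugate_fin_two]
    congr 1
    ext i j
    fin_cases i <;> fin_cases j <;> simp
  refine ⟨![1, 0], ![1, 0], ?_, ?_, ?_⟩
  · intro i; fin_cases i <;> simpa using (by first | exact hone_mem | exact hzero_mem)
  · intro i; fin_cases i <;> simpa using (by first | exact hone_mem | exact hzero_mem)
  -- compute the value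
  have hval : (M.mulVec ![1, 0]) ⬝ᵥ ((tQ - 1) • M⁻¹.mulVec ![1, 0])
      = (tQ - 1) * (tQ ^ 2 - 2 * tQ) * d⁻¹ := by
    rw [hMinv, hMval]
    simp [Matrix.mulVec, dotProduct, Fin.sum_univ_two, Matrix.smul_apply]
    field_simp
    ring
  rw [hval]
  -- show not in Lam
  intro hmem
  obtain ⟨p, n, hp⟩ := Lam_le_Spoly hmem
  -- multiply through by d
  have key : algQ ((Polynomial.X - 1) * (Polynomial.X ^ 2 - 2 * Polynomial.X)
        * Polynomial.X ^ n)
      = algQ (p * (Polynomial.X ^ 2 - Polynomial.X + 1)) := by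
    rw [_root_.map_mul, _root_.map_mul, _root_.map_mul, ← hDpoly, ← hp]
    push_cast [_root_.map_sub, map_pow, _root_.map_one, _root_.map_ofNat, ← htA]
    field_simp
  have keyp := RatFunc.algebraMap_injective ℚ key
  -- evaluate at zeta
  have this : (zeta - 1) * (zeta ^ 2 - 2 * zeta) * zeta ^ n
      = (Polynomial.aeval zeta) p * (zeta ^ 2 - zeta + 1) := by
    have h := congrArg (Polynomial.aeval zeta) keyp
    simp only [_root_.map_mul, _root_.map_sub, _root_.map_add, map_pow,
      _root_.map_one, _root_.map_ofNat, Polynomial.aeval_X] at h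
    exact h
  rw [zeta_sq, mul_zero] at this
  have h1 : zeta - 1 ≠ 0 := sub_ne_zero.mpr zeta_ne_one
  have h2 : zeta ^ 2 - 2 * zeta ≠ 0 := by
    intro h
    have : zeta * (zeta - 2) = 0 := by rw [← h]; ring
    rcases mul_eq_zero.mp this with h | h
    · exact zeta_ne_zero h
    · exact zeta_ne_two (by linear_combination h)
  have h3 : zeta ^ n ≠ 0 := pow_ne_zero _ zeta_ne_zero
  exact (mul_ne_zero (mul_ne_zero h1 h2) h3) this
end

section
/- Let M be a hermitian k×k matrix over Λ = ℤ[t,t⁻¹] with det(M) ≠ 0. If w ∈ Λ^k is such that vᵀ M(t⁻¹)⁻¹ w̄ ∈ Λ for all v ∈ Λ^k, then w ∈ MΛ^k. In other words, the adjoint map from Λ^k/MΛ^k to the conjugated dual module Hom_Λ(Λ^k/MΛ^k, Q/Λ), sending w to the functional v ↦ vᵀ M(t⁻¹)⁻¹ w̄ mod Λ, is injective. -/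
open Matrix

set_option maxHeartbeats 2000000
set_option synthInstance.maxHeartbeats 2000000

lemma eval2_ne_zero (q : Polynomial ℚ) (hq : q ≠ 0) :
    q.eval₂ (algebraMap ℚ (RatFunc ℚ)) tQ⁻¹ ≠ 0 := by
  have hX : (tQ⁻¹ : RatFunc ℚ) ≠ 0 := inv_ne_zero RatFunc.X_ne_zero
  have : Invertible (tQ⁻¹ : RatFunc ℚ) := invertibleOfNonzero hX
  have key := Polynomial.eval₂_reverse_eq_zero_iff (algebraMap ℚ (RatFunc ℚ)) tQ⁻¹ q
  rw [invOf_eq_inv, inv_inv] at key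
  intro hzero
  have : q.reverse.eval₂ (algebraMap ℚ (RatFunc ℚ)) tQ = 0 := key.mpr hzero
  rw [show (tQ : RatFunc ℚ) = RatFunc.X from rfl, ← Polynomial.aeval_def, ← RatFunc.algebraMap_X,
    Polynomial.aeval_algebraMap_apply, Polynomial.aeval_X_left_apply] at this
  exact (Polynomial.reverse_eq_zero.not.mpr hq)
    ((map_eq_zero_iff _ (IsFractionRing.injective (Polynomial ℚ) (RatFunc ℚ))).mp this)

noncomputable def conjC : RatFunc ℚ →+* RatFunc ℚ where
  toFun := conjQ
  map_one' := RatFunc.eval_one _ _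
  map_mul' x y := RatFunc.eval_mul _ _
    (eval2_ne_zero _ (RatFunc.denom_ne_zero x)) (eval2_ne_zero _ (RatFunc.denom_ne_zero y))
  map_zero' := RatFunc.eval_zero _ _
  map_add' x y := RatFunc.eval_add _ _
    (eval2_ne_zero _ (RatFunc.denom_ne_zero x)) (eval2_ne_zero _ (RatFunc.denom_ne_zero y))

lemma conjC_tQ : conjC tQ = tQ⁻¹ := RatFunc.eval_X _ _

lemma conjC_mem_Lam {x : RatFunc ℚ} (hx : x ∈ Lam) : conjC x ∈ Lam := by
  have : Lam.map conjC ≤ Lam := by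
    rw [Lam, RingHom.map_closure conjC {tQ, tQ⁻¹}]
    apply Subring.closure_le.mpr
    rintro y ⟨z, hz, rfl⟩
    rcases hz with rfl | rfl
    · rw [conjC_tQ]; exact Subring.subset_closure (Or.inr rfl)
    · rw [map_inv₀, conjC_tQ, inv_inv]; exact Subring.subset_closure (Or.inl rfl)
  exact this ⟨x, hx, rfl⟩

lemma conjC_conjC {x : RatFunc ℚ} (hx : x ∈ Lam) : conjC (conjC x) = x := by
  have : Lam ≤ RingHom.eqLocus (conjC.comp conjC) (RingHom.id _) := by
    apply Subring.closure_le.mpr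
    rintro y (rfl | rfl)
    · show conjC (conjC tQ) = tQ
      rw [conjC_tQ, map_inv₀, conjC_tQ, inv_inv]
    · show conjC (conjC tQ⁻¹) = tQ⁻¹
      rw [map_inv₀, conjC_tQ, inv_inv, conjC_tQ]
  exact this hx

lemma conjC_apply (x : RatFunc ℚ) : conjC x = conjQ x := rfl

theorem hermitian_matrix_linking_pairing_adjoint_injective (k : ℕ)
    (M : Matrix (Fin k) (Fin k) (RatFunc ℚ)) (hM : ∀ i j, M i j ∈ Lam)
    (hherm : (M.map conjQ)ᵀ = M) (hdet : M.det ≠ 0)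
    (w : Fin k → RatFunc ℚ) (hw : ∀ i, w i ∈ Lam)
    (h : ∀ v : Fin k → RatFunc ℚ, (∀ i, v i ∈ Lam) →
      v ⬝ᵥ (M.map conjQ)⁻¹.mulVec (fun i => conjQ (w i)) ∈ Lam) :
    ∃ u : Fin k → RatFunc ℚ, (∀ i, u i ∈ Lam) ∧ w = M.mulVec u := by
  have hN : M.map conjQ = Mᵀ := by
    have := congrArg transpose hherm
    rwa [transpose_transpose] at this
  have hdetN : (Mᵀ).det ≠ 0 := by rwa [det_transpose]
  have hU : IsUnit (Mᵀ).det := isUnit_iff_ne_zero.mpr hdetN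
  set x : Fin k → RatFunc ℚ := (Mᵀ)⁻¹.mulVec (fun i => conjQ (w i)) with hxdef
  have hx : ∀ j, x j ∈ Lam := by
    intro j
    have hv : ∀ i, (Pi.single j 1 : Fin k → RatFunc ℚ) i ∈ Lam := by
      intro i
      by_cases hij : i = j
      · subst hij; rw [Pi.single_eq_same]; exact Lam.one_mem
      · rw [Pi.single_eq_of_ne hij]; exact Lam.zero_mem
    have := h (Pi.single j 1) hv
    rwa [hN, single_dotProduct, one_mul] at this
  have hMx : Mᵀ.mulVec x = fun i => conjQ (w i) := by
    rw [hxdef, mulVec_mulVec, mul_nonsing_inv _ hU, one_mulVec]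
  refine ⟨fun i => conjC (x i), fun i => conjC_mem_Lam (hx i), ?_⟩
  funext i
  have h1 : conjC (w i) = ∑ j, M j i * x j := by
    rw [conjC_apply, ← congrFun hMx i]
    simp [mulVec, dotProduct, transpose_apply]
  have h2 : ∀ j, conjC (M j i) = M i j := by
    intro j
    rw [conjC_apply, show conjQ (M j i) = (M.map conjQ) j i from rfl, hN, transpose_apply]
  calc w i = conjC (conjC (w i)) := (conjC_conjC (hw i)).symm
    _ = conjC (∑ j, M j i * x j) := by rw [h1]
    _ = ∑ j, conjC (M j i) * conjC (x j) := by rw [map_sum]; simp [_root_.map_mul]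
    _ = ∑ j, M i j * conjC (x j) := by simp_rw [h2]
    _ = M.mulVec (fun i => conjC (x i)) i := by simp [mulVec, dotProduct]
end
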